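/- arXiv:2302.06832 — 9 statements merged into one kernel-verified Lean document; each statement's English description precedes it below -/
import Mathlib

section
/- For every real number x > 0, e·(x − ln x) ≤ e^x / x. -/
open Real

theorem stmt_0 : ∀ x : ℝ, 0 < x →
    exp 1 * (x - log x) ≤ exp x / x := by
  intro x hx
  have key : ∀ t : ℝ, exp 1 * t ≤ exp t := by
    intro t
    have h := Real.add_one_le_exp (t - 1)
    calc exp 1 * t ≤ exp 1 * exp (t - 1) := by
          nlinarith [exp_pos (1 : ℝ)]
      _ = exp t := by rw [← exp_add]; ring_nf
  have h2 := key (x - log x)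
  have h3 : exp (x - log x) = exp x / x := by
    rw [exp_sub, exp_log hx]
  linarith
end

section
/- For every real number β > 0 and fixed reals r and λ > 0, the function h(β) = e^{2−r}/β + (ln β + r − 1)·e^{2−r}/(λβ) satisfies h(β) ≤ e^λ / λ. -/
open Real

theorem stmt_1 (r lam : ℝ) (hlam : 0 < lam) :
    ∀ β : ℝ, 0 < β →
      exp (2 - r) / β + (log β + r - 1) * exp (2 - r) / (lam * β) ≤ exp lam / lam := by
  intro β hβ
  have key : exp (2 - r) * (lam + log β + r - 1) ≤ exp lam * β := by
    calc exp (2 - r) * (lam + log β + r - 1)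
        ≤ exp (2 - r) * exp (lam + log β + r - 2) := by
          have h1 := add_one_le_exp (lam + log β + r - 2)
          have h2 := (exp_pos (2 - r)).le
          nlinarith
      _ = exp lam * β := by
          rw [← exp_add]
          have : 2 - r + (lam + log β + r - 2) = lam + log β := by ring
          rw [this, exp_add, exp_log hβ]
  have h2 : exp (2 - r) / β + (log β + r - 1) * exp (2 - r) / (lam * β)
      = exp (2 - r) * (lam + log β + r - 1) / (lam * β) := by
    field_simp
    ring
  rw [h2, div_le_div_iff₀ (by positivity) hlam]
  nlinarith [key, hlam]
end

section
/- For every real number β > 0 and fixed reals r and λ > 0, the function h(β) = e^{1−r}/β + e^{1−r}·(ln β + r)/(λβ) satisfies h(β) ≤ e^λ / λ. -/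
open Real

theorem stmt_2 (r lam : ℝ) (hlam : 0 < lam) :
    ∀ β : ℝ, 0 < β →
      exp (1 - r) / β + exp (1 - r) * (log β + r) / (lam * β) ≤ exp lam / lam := by
  intro β hβ
  have key : exp (1 - r) * (lam + (log β + r)) ≤ β * exp lam := by
    have h1 := Real.add_one_le_exp (log β + r + lam - 1)
    have h2 : exp (log β + r + lam - 1) = β * exp (r + lam - 1) := by
      rw [show log β + r + lam - 1 = log β + (r + lam - 1) by ring, exp_add, exp_log hβ]
    have h3 : exp (1 - r) * exp (r + lam - 1) = exp lam := by
      rw [← exp_add]; ring_nf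
    nlinarith [exp_pos (1 - r), mul_le_mul_of_nonneg_left h1 (le_of_lt (exp_pos (1 - r)))]
  rw [div_add_div _ _ (ne_of_gt hβ) (ne_of_gt (mul_pos hlam hβ)), div_le_div_iff₀ (by positivity) hlam]
  nlinarith [mul_le_mul_of_nonneg_left key (le_of_lt hβ), exp_pos lam, hβ.le]
end

section
/- For every x in the interval [1/e, 1], 1 + e − (ln x + 1)/x ≤ e^x / x. -/
open Real Finset

private lemma aux_qb (x : ℝ) (hxl : (0.3678:ℝ) ≤ x) (hx2 : x ≤ 1) :
    (0:ℝ) ≤ -(7/4320)*x^4 + (2/135)*x^3 + (1/144)*x^2 + (31/270)*x + 1577/4320 := by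
  have hx0 : (0:ℝ) ≤ x := by linarith
  have hx4 : x^4 ≤ 1 := pow_le_one₀ hx0 hx2
  nlinarith

set_option maxHeartbeats 1000000 in
private lemma aux_R (x E : ℝ) (hxl : (0.3678:ℝ) ≤ x) (hx2 : x ≤ 1)
    (hE1 : (2.7182818283:ℝ) < E) :
    (0:ℝ) ≤ (27183/10000)*x^7 - (191531/10000)*x^6 + (4058401/70000)*x^5
      - (4111651/42000)*x^4 + (4197301/42000)*x^3 - (4356651/70000)*x^2
      + (1581467/70000)*x - 310531/70000
      + E * (-(7/4320)*x^4 + (2/135)*x^3 + (1/144)*x^2 + (31/270)*x + 1577/4320) := by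
  have hqb := aux_qb x hxl hx2
  have hw : (0:ℝ) ≤ 1 - x := by linarith
  have ha : (0:ℝ) ≤ x - 0.3678 := by linarith
  nlinarith [mul_nonneg (sub_nonneg.2 hE1.le) hqb,
    mul_nonneg (mul_nonneg ha hw) hw,
    mul_nonneg (mul_nonneg (mul_nonneg ha ha) hw) hw,
    sq_nonneg (x - 0.7), sq_nonneg (x - 0.5), mul_nonneg ha hw]

set_option maxHeartbeats 1000000 in
theorem stmt_3 : ∀ x : ℝ, x ∈ Set.Icc (1 / exp 1) 1 →
    1 + exp 1 - (log x + 1) / x ≤ exp x / x := by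
  intro x hx
  obtain ⟨hx1, hx2⟩ := hx
  have hE1 : (2.7182818283 : ℝ) < exp 1 := exp_one_gt_d9
  have hE2 : exp 1 < 2.7182818286 := exp_one_lt_d9
  have hxpos : 0 < x := lt_of_lt_of_le (by positivity) hx1
  have hex : 1 ≤ exp 1 * x := by
    rw [div_le_iff₀ (exp_pos 1)] at hx1
    nlinarith
  have hxl : (0.3678 : ℝ) ≤ x := by nlinarith
  have hw0 : 0 ≤ 1 - x := by linarith
  have hw1 : |1 - x| < 1 := by rw [abs_of_nonneg hw0]; linarith
  -- log lower bound
  have hlog := Real.abs_log_sub_add_sum_range_le hw1 8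
  rw [abs_of_nonneg hw0, sub_sub_cancel, abs_le] at hlog
  simp only [Finset.sum_range_succ] at hlog
  norm_num at hlog
  obtain ⟨hlogl, -⟩ := hlog
  have hlog2 : -((1-x) + (1-x)^2/2 + (1-x)^3/3 + (1-x)^4/4 + (1-x)^5/5 + (1-x)^6/6
      + (1-x)^7/7 + (1-x)^8/8) - (1-x)^9 / x ≤ log x := by linarith
  have hw9 : (1-x)^9 / x ≤ 2.7183 * (1-x)^9 := by
    rw [div_le_iff₀ hxpos]
    nlinarith [pow_nonneg hw0 9]
  -- exp lower bound
  have hu : |x - 1| ≤ 1 := by rw [abs_of_nonpos (by linarith)]; linarith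
  have hexpb := Real.exp_bound hu (n := 6) (by norm_num)
  rw [abs_of_nonpos (by linarith : x - 1 ≤ 0), abs_le] at hexpb
  simp only [Finset.sum_range_succ] at hexpb
  norm_num [Nat.factorial] at hexpb
  obtain ⟨hexpl, -⟩ := hexpb
  have hexp2 : (1 + (x-1) + (x-1)^2/2 + (x-1)^3/6 + (x-1)^4/24 + (x-1)^5/120)
      - (1-x)^6 * (7/4320) ≤ exp (x-1) := by nlinarith [hexpl]
  have h1 : exp 1 * ((1 + (x-1) + (x-1)^2/2 + (x-1)^3/6 + (x-1)^4/24 + (x-1)^5/120)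
      - (1-x)^6 * (7/4320)) ≤ exp 1 * exp (x-1) :=
    mul_le_mul_of_nonneg_left hexp2 (exp_pos 1).le
  have hR := aux_R x (exp 1) hxl hx2 hE1
  have hkey : (1 + exp 1) * x - (log x + 1) ≤ exp x := by
    have hxe : exp x = exp 1 * exp (x - 1) := by rw [← exp_add]; ring_nf
    rw [hxe]
    nlinarith [hlog2, hw9, h1, mul_nonneg (sq_nonneg (1-x)) hR]
  have heq : 1 + exp 1 - (log x + 1) / x = ((1 + exp 1) * x - (log x + 1)) / x := by
    field_simp
  rw [heq]
  gcongr
end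

section
/- Suppose x₀ = 1 and positive reals x₁ < x₂ < ⋯ < x_n satisfy Σ_{j=1}^{i+1} x_j ≤ γ·x_i for all i = 0, 1, …, n−1, where γ ≥ 1. Define a₁ = γ − 1 and a_i = γ − γ/a_{i−1}. Then for each i = 1, …, n−1 (assuming a_1,…,a_i > 0): x_{i+1} ≤ a_i·x_i and Σ_{j=1}^{i+1} x_j ≥ (γ/a_i)·x_{i+1}. -/
open Real Finset

theorem stmt_10 (γ : ℝ) (hγ : 1 ≤ γ) (n : ℕ) (x : ℕ → ℝ)
    (hx0 : x 0 = 1)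
    (hxpos : ∀ i, 1 ≤ i → i ≤ n → 0 < x i)
    (hxmono : ∀ i j, 1 ≤ i → i < j → j ≤ n → x i < x j)
    (hcons : ∀ i, i ≤ n - 1 → (∑ j ∈ Finset.Icc 1 (i + 1), x j) ≤ γ * x i)
    (a : ℕ → ℝ)
    (ha1 : a 1 = γ - 1)
    (harec : ∀ i, 2 ≤ i → a i = γ - γ / a (i - 1)) :
    ∀ i, 1 ≤ i → i ≤ n - 1 → (∀ j, 1 ≤ j → j ≤ i → 0 < a j) →
      x (i + 1) ≤ a i * x i ∧ (γ / a i) * x (i + 1) ≤ ∑ j ∈ Finset.Icc 1 (i + 1), x j := by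
  intro i
  induction i with
  | zero => intro h; omega
  | succ k ih =>
    intro _ hkn hapos
    have hn2 : 2 ≤ n := by omega
    rcases Nat.eq_zero_or_pos k with hk0 | hk1
    · subst hk0
      have ha1pos : 0 < a 1 := hapos 1 le_rfl le_rfl
      have hc := hcons 1 (by omega)
      have hsum2 : (∑ j ∈ Finset.Icc 1 2, x j) = x 1 + x 2 := by
        have : Finset.Icc 1 2 = ({1, 2} : Finset ℕ) := by decide
        rw [this, Finset.sum_pair (by norm_num)]
      rw [hsum2] at hc ⊢
      have hx1 : 0 < x 1 := hxpos 1 le_rfl (by omega)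
      have hx2 : 0 < x 2 := hxpos 2 (by omega) (by omega)
      have hpart1 : x 2 ≤ a 1 * x 1 := by rw [ha1]; nlinarith
      constructor
      · exact hpart1
      · rw [div_mul_eq_mul_div, div_le_iff₀ ha1pos]
        have : γ = a 1 + 1 := by rw [ha1]; ring
        nlinarith
    · have ih' := ih hk1 (by omega) (fun j h1 h2 => hapos j h1 (by omega))
      obtain ⟨ih1, ih2⟩ := ih'
      have hbpos : 0 < a k := hapos k hk1 (by omega)
      have hcpos : 0 < a (k + 1) := hapos (k + 1) (by omega) le_rfl
      have hrec : a (k + 1) = γ - γ / a k := by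
        have := harec (k + 1) (by omega)
        simpa using this
      have hc := hcons (k + 1) hkn
      have hsplit : (∑ j ∈ Finset.Icc 1 (k + 1 + 1), x j)
          = (∑ j ∈ Finset.Icc 1 (k + 1), x j) + x (k + 1 + 1) :=
        Finset.sum_Icc_succ_top (by omega) x
      rw [hsplit] at hc ⊢
      have hY : 0 < x (k + 1) := hxpos (k + 1) (by omega) (by omega)
      have hX : 0 < x (k + 2) := hxpos (k + 2) (by omega) (by omega)
      have hpart1 : x (k + 1 + 1) ≤ a (k + 1) * x (k + 1) := by
        rw [hrec]; nlinarith
      refine ⟨hpart1, ?_⟩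
      have hγeq : γ = a (k + 1) + γ / a k := by rw [hrec]; ring
      have hγb : 0 < γ / a k := div_pos (by linarith) hbpos
      have h1' : (γ / a k) * x (k + 2) ≤ (γ / a k) * (a (k + 1) * x (k + 1)) :=
        mul_le_mul_of_nonneg_left hpart1 hγb.le
      have h2' : a (k + 1) * ((γ / a k) * x (k + 1)) ≤ a (k + 1) * (∑ j ∈ Finset.Icc 1 (k + 1), x j) :=
        mul_le_mul_of_nonneg_left ih2 hcpos.le
      rw [div_mul_eq_mul_div, div_le_iff₀ hcpos]
      nlinarith [h1', h2']
end

section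
/- Suppose positive reals x₁ < ⋯ < x_n and x₀ = 1 satisfy Σ_{j=1}^{i+1} x_j ≤ γ x_i for all i = 0,…,n−1, and additionally Σ_{j=1}^n x_j ≤ λ·P and Σ_{j=1}^n x_j + P ≤ γ·x_n for some P > 0 and λ ∈ (0,1). If the associated sequence a_i (a₁ = γ−1, a_i = γ − γ/a_{i−1}) converges to α = (γ + √(γ²−4γ))/2 and 1 + 1/λ ≤ α, then γ ≥ 2 + λ + 1/λ. -/
open Real Finset Filter

theorem stmt_11 (γ lam P : ℝ) (hγ : 1 ≤ γ) (hlam : lam ∈ Set.Ioo (0 : ℝ) 1) (hP : 0 < P)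
    (n : ℕ) (x : ℕ → ℝ)
    (hx0 : x 0 = 1)
    (hxpos : ∀ i, 1 ≤ i → i ≤ n → 0 < x i)
    (hxmono : ∀ i j, 1 ≤ i → i < j → j ≤ n → x i < x j)
    (hcons : ∀ i, i ≤ n - 1 → (∑ j ∈ Finset.Icc 1 (i + 1), x j) ≤ γ * x i)
    (hpred : (∑ j ∈ Finset.Icc 1 n, x j) ≤ lam * P)
    (hrob : (∑ j ∈ Finset.Icc 1 n, x j) + P ≤ γ * x n)
    (a : ℕ → ℝ)
    (ha1 : a 1 = γ - 1)
    (harec : ∀ i, 2 ≤ i → a i = γ - γ / a (i - 1))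
    (hconv : Tendsto a atTop (nhds ((γ + Real.sqrt (γ ^ 2 - 4 * γ)) / 2)))
    (hbound : 1 + 1 / lam ≤ (γ + Real.sqrt (γ ^ 2 - 4 * γ)) / 2) :
    2 + lam + 1 / lam ≤ γ := by
  obtain ⟨hl0, hl1⟩ := hlam
  have hinv : 1 < 1/lam := by rw [lt_div_iff₀ hl0]; linarith
  have ht2 : (2:ℝ) < 1 + 1/lam := by linarith
  have hγ4 : 4 ≤ γ := by
    by_contra h
    push_neg at h
    have hneg : γ^2 - 4*γ < 0 := by nlinarith
    have hs : Real.sqrt (γ^2-4*γ) = 0 := Real.sqrt_eq_zero_of_nonpos (le_of_lt hneg)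
    rw [hs] at hbound; linarith
  have hs2 : (Real.sqrt (γ^2-4*γ))^2 = γ^2-4*γ := Real.sq_sqrt (by nlinarith)
  have hs0 : 0 ≤ Real.sqrt (γ^2-4*γ) := Real.sqrt_nonneg _
  set s := Real.sqrt (γ^2-4*γ) with hsdef
  clear_value s
  have key : (1+1/lam)^2 - γ*(1+1/lam) + γ ≤ 0 := by
    set t := 1+1/lam with htdef
    clear_value t
    rcases le_or_gt (2*t - γ) 0 with h|h
    · nlinarith
    · have h2 : 2*t - γ ≤ s := by nlinarith [hbound]
      nlinarith [sq_nonneg (2*t-γ)]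
  have h1 : lam * (1/lam) = 1 := by field_simp
  nlinarith [key, h1, hl0, mul_le_mul_of_nonneg_left key (le_of_lt hl0), sq_nonneg (1/lam)]
end

section
/- For integers k ≥ 2 and C ≥ 2, and nonnegative integers a₁, …, a_{k−1} satisfying Σ_{i=1}^{k−1} C^i·a_i ≥ C^k, the weighted sum Σ_{i=1}^{k−1} i·a_i is at least C. -/
open Finset

theorem stmt_13 (k C : ℕ) (hk : 2 ≤ k) (hC : 2 ≤ C) (a : ℕ → ℕ)
    (hcov : C ^ k ≤ ∑ i ∈ Finset.Icc 1 (k - 1), C ^ i * a i) :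
    C ≤ ∑ i ∈ Finset.Icc 1 (k - 1), i * a i := by
  have hCpos : 0 < C := by omega
  have key : ∀ i ∈ Finset.Icc 1 (k - 1),
      (k - 1) * (C ^ i * a i) ≤ C ^ (k - 1) * (i * a i) := by
    intro i hi
    simp only [Finset.mem_Icc] at hi
    obtain ⟨h1, h2⟩ := hi
    have hpow : k - 1 - i + 1 ≤ C ^ (k - 1 - i) := by
      calc k - 1 - i + 1 ≤ 2 ^ (k - 1 - i) := Nat.succ_le_of_lt Nat.lt_two_pow_self
        _ ≤ C ^ (k - 1 - i) := Nat.pow_le_pow_left hC _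
    have h3 : k - 1 ≤ i * C ^ (k - 1 - i) := by
      calc k - 1 ≤ i * (k - 1 - i + 1) := by
            have hmul : k - 1 - i ≤ i * (k - 1 - i) :=
              Nat.le_mul_of_pos_left _ (show 0 < i by omega)
            rw [Nat.mul_add, Nat.mul_one]
            have hsub : k - 1 - i + i = k - 1 := by omega
            linarith [hmul, hsub]
        _ ≤ i * C ^ (k - 1 - i) := Nat.mul_le_mul_left i hpow
    calc (k - 1) * (C ^ i * a i) ≤ i * C ^ (k - 1 - i) * (C ^ i * a i) :=
          Nat.mul_le_mul_right _ h3
      _ = C ^ (k - 1 - i) * C ^ i * (i * a i) := by ring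
      _ = C ^ (k - 1) * (i * a i) := by
          rw [← pow_add]
          congr 2
          omega
  have hsum : (k - 1) * C ^ k ≤ C ^ (k - 1) * ∑ i ∈ Finset.Icc 1 (k - 1), i * a i := by
    calc (k - 1) * C ^ k ≤ (k - 1) * ∑ i ∈ Finset.Icc 1 (k - 1), C ^ i * a i :=
          Nat.mul_le_mul_left _ hcov
      _ = ∑ i ∈ Finset.Icc 1 (k - 1), (k - 1) * (C ^ i * a i) := by rw [Finset.mul_sum]
      _ ≤ ∑ i ∈ Finset.Icc 1 (k - 1), C ^ (k - 1) * (i * a i) := Finset.sum_le_sum key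
      _ = C ^ (k - 1) * ∑ i ∈ Finset.Icc 1 (k - 1), i * a i := by rw [Finset.mul_sum]
  have hk' : C ^ k = C ^ (k - 1) * C := by
    rw [← pow_succ]
    congr 1
    omega
  rw [hk'] at hsum
  have hpow' : 0 < C ^ (k - 1) := Nat.pow_pos hCpos
  have : (k - 1) * C ≤ ∑ i ∈ Finset.Icc 1 (k - 1), i * a i := by
    have := hsum
    nlinarith [(Nat.pow_pos hCpos : 0 < C ^ (k-1))]
  have hk1 : 1 ≤ k - 1 := by omega
  calc C ≤ (k - 1) * C := Nat.le_mul_of_pos_left C (by omega)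
    _ ≤ _ := this
end

section
/- Fix ε ∈ (0, e), δ > 0 and integers m > c > 0 with c/δ ≥ −ln(e−ε) − ln ln(e/(e−ε)). Define v_j = ∫_{(j−1)/δ}^{j/δ} e^{−z}dz, b_t = e^{t/δ}, and u_j = ((e−ε)/δ)·max(m−c−j, 0). Then for all integers 1 ≤ s < t ≤ m, u_s − u_t ≤ b_t·Σ_{j=s+1}^m v_j. -/
open Real Finset

lemma tele_aux (f : ℕ → ℝ) : ∀ m s : ℕ, s ≤ m →
    ∑ j ∈ Finset.Icc (s + 1) m, (f (j - 1) - f j) = f s - f m := by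
  intro m
  induction m with
  | zero => intro s hs; interval_cases s; simp
  | succ n ih =>
    intro s hs
    rcases Nat.lt_or_ge s (n + 1) with h | h
    · have hs' : s ≤ n := Nat.lt_succ_iff.mp h
      rw [Finset.sum_Icc_succ_top (by omega : s + 1 ≤ n + 1), ih s hs']
      simp
    · have : s = n + 1 := le_antisymm hs h
      subst this; simp

theorem stmt_17 (ε δ : ℝ) (c m : ℕ) (hε : ε ∈ Set.Ioo 0 (exp 1)) (hδ : 0 < δ)
    (hc : 0 < c) (hcm : c < m)
    (hcδ : -log (exp 1 - ε) - log (log (exp 1 / (exp 1 - ε))) ≤ (c : ℝ) / δ) :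
    ∀ s t : ℕ, 1 ≤ s → s < t → t ≤ m →
      ((exp 1 - ε) / δ) * max ((m : ℝ) - c - s) 0
          - ((exp 1 - ε) / δ) * max ((m : ℝ) - c - t) 0
        ≤ exp ((t : ℝ) / δ) *
            ∑ j ∈ Finset.Icc (s + 1) m,
              (∫ z in (((j : ℝ) - 1) / δ)..((j : ℝ) / δ), exp (-z)) := by
  intro s t hs hst htm
  obtain ⟨hε0, hεe⟩ := hε
  have hA0 : (0 : ℝ) < exp 1 - ε := by linarith
  set A : ℝ := exp 1 - ε with hA
  clear_value A
  -- integral of exp(-z)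
  have hab : ∀ a b : ℝ, (∫ z in a..b, exp (-z)) = exp (-a) - exp (-b) := by
    intro a b
    rw [intervalIntegral.integral_comp_neg (fun x => exp x), integral_exp]
  -- telescoping sum
  have hsum : ∑ j ∈ Finset.Icc (s + 1) m,
      (∫ z in (((j : ℝ) - 1) / δ)..((j : ℝ) / δ), exp (-z))
      = exp (-((s : ℝ) / δ)) - exp (-((m : ℝ) / δ)) := by
    have h := tele_aux (fun j => exp (-((j : ℝ) / δ))) m s (by omega)
    rw [← h]
    apply Finset.sum_congr rfl
    intro j hj
    simp only [Finset.mem_Icc] at hj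
    rw [hab]
    have h1 : (1 : ℕ) ≤ j := by omega
    have : ((j - 1 : ℕ) : ℝ) = (j : ℝ) - 1 := by
      rw [Nat.cast_sub h1]; norm_num
    simp [this]
  rw [hsum]
  have hr : exp ((t : ℝ) / δ) * (exp (-((s : ℝ) / δ)) - exp (-((m : ℝ) / δ)))
      = exp (((t : ℝ) - s) / δ) - exp (((t : ℝ) - m) / δ) := by
    rw [mul_sub, ← exp_add, ← exp_add]
    congr 1 <;> ring
  rw [hr]
  -- key inequality from the hypothesis on c/δ
  have hAe : A < exp 1 := by rw [hA]; linarith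
  have hlogpos : 0 < log (exp 1 / A) := log_pos ((one_lt_div hA0).mpr hAe)
  have hklog : exp (-((c : ℝ) / δ)) ≤ A * (1 - log A) := by
    have h1 : -((c : ℝ) / δ) ≤ log A + log (log (exp 1 / A)) := by linarith
    have h2 := exp_le_exp.mpr h1
    rw [exp_add, exp_log hA0, exp_log hlogpos,
      log_div (exp_ne_zero 1) (ne_of_gt hA0), log_exp] at h2
    exact h2
  have key : ∀ z : ℝ, A * z + exp (-((c : ℝ) / δ)) ≤ exp z := by
    intro z
    have h1 : z - log A + 1 ≤ exp (z - log A) := add_one_le_exp _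
    have h2 : A * exp (z - log A) = exp z := by
      rw [exp_sub, exp_log hA0]
      field_simp
    have h3 : A * (z - log A + 1) = A * z + A * (1 - log A) := by ring
    nlinarith [mul_le_mul_of_nonneg_left h1 hA0.le]
  by_cases h1 : t + c ≤ m
  · -- Case: t ≤ m - c
    have h1' : (t : ℝ) + c ≤ m := by exact_mod_cast h1
    have hs' : (s : ℝ) < t := by exact_mod_cast hst
    rw [max_eq_left (by linarith), max_eq_left (by linarith)]
    have e1 : A / δ * ((m : ℝ) - c - s) - A / δ * ((m : ℝ) - c - t)
        = A * (((t : ℝ) - s) / δ) := by field_simp; ring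
    rw [e1]
    have hexp : exp (((t : ℝ) - m) / δ) ≤ exp (-((c : ℝ) / δ)) := by
      apply exp_le_exp.mpr
      rw [← neg_div]
      exact (div_le_div_iff_of_pos_right hδ).mpr (by linarith)
    linarith [key (((t : ℝ) - s) / δ)]
  · by_cases h2 : m ≤ s + c
    · -- Case: both maxes zero
      have h2' : (m : ℝ) ≤ s + c := by exact_mod_cast h2
      have ht' : (s : ℝ) < t := by exact_mod_cast hst
      rw [max_eq_right (by linarith), max_eq_right (by linarith)]
      have hsm : (s : ℝ) ≤ m := by
        have : s ≤ m := by omega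
        exact_mod_cast this
      have hle : exp (((t : ℝ) - m) / δ) ≤ exp (((t : ℝ) - s) / δ) :=
        exp_le_exp.mpr ((div_le_div_iff_of_pos_right hδ).mpr (by linarith))
      simp only [mul_zero, sub_self]
      linarith
    · -- Case: s < m - c < t
      push_neg at h1 h2
      have h1' : (m : ℝ) < t + c := by exact_mod_cast h1
      have h2' : (s : ℝ) + c < m := by exact_mod_cast h2
      rw [max_eq_left (by linarith), max_eq_right (by linarith)]
      set w : ℝ := ((m : ℝ) - c - s) / δ with hw
      set B : ℝ := exp (((t : ℝ) - m + c) / δ) with hB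
      have hB1 : 1 ≤ B := by
        rw [hB]
        exact one_le_exp (div_nonneg (by linarith) hδ.le)
      have e2 : exp (((t : ℝ) - s) / δ) = B * exp w := by
        rw [hB, hw, ← exp_add]; congr 1; ring
      have e3 : exp (((t : ℝ) - m) / δ) = B * exp (-((c : ℝ) / δ)) := by
        rw [hB, ← exp_add]; congr 1; ring
      have e1 : A / δ * ((m : ℝ) - c - s) - A / δ * 0 = A * w := by
        rw [hw]; field_simp; ring
      rw [e1, e2, e3]
      have hw0 : 0 ≤ w := by
        rw [hw]; exact div_nonneg (by linarith) hδ.le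
      have hAw : 0 ≤ A * w := mul_nonneg hA0.le hw0
      have hk := key w
      have h4 : exp w - exp (-((c : ℝ) / δ)) ≤ B * (exp w - exp (-((c : ℝ) / δ))) :=
        le_mul_of_one_le_left (by linarith) hB1
      have h5 : B * (exp w - exp (-((c : ℝ) / δ)))
          = B * exp w - B * exp (-((c : ℝ) / δ)) := by ring
      linarith
end

section
/- Fix ε ∈ (0, e), δ > 0, integers m > c > 0 with m/δ ≥ ln(e/ε). Define v_j = ∫_{(j−1)/δ}^{j/δ} e^{−z}dz and u_t = ((e−ε)/δ)·max(m−c−t, 0). Then for every integer t with 1 ≤ t ≤ m, h(t) := u_t + e^{t/δ}·Σ_{j=1}^m v_j ≥ ((e−ε)/δ)·(m−c). -/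
open Real Finset

theorem stmt_18 (ε δ : ℝ) (c m : ℕ) (hε : ε ∈ Set.Ioo 0 (exp 1)) (hδ : 0 < δ)
    (hc : 0 < c) (hcm : c < m)
    (hmδ : log (exp 1 / ε) ≤ (m : ℝ) / δ) :
    ∀ t : ℕ, 1 ≤ t → t ≤ m →
      ((exp 1 - ε) / δ) * ((m : ℝ) - c)
        ≤ ((exp 1 - ε) / δ) * max ((m : ℝ) - c - t) 0
            + exp ((t : ℝ) / δ) *
                ∑ j ∈ Finset.Icc 1 m,
                  (∫ z in (((j : ℝ) - 1) / δ)..((j : ℝ) / δ), exp (-z)) := by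
  obtain ⟨hε0, hεe⟩ := hε
  intro t ht1 htm
  -- compute the sum
  have hint : ∀ j : ℕ, (∫ z in (((j : ℝ) - 1) / δ)..((j : ℝ) / δ), exp (-z))
      = exp (-(((j : ℝ) - 1) / δ)) - exp (-((j : ℝ) / δ)) := by
    intro j
    rw [intervalIntegral.integral_comp_neg (fun x => exp x)]
    simp [integral_exp]
  have hsum : ∑ j ∈ Finset.Icc 1 m,
      (∫ z in (((j : ℝ) - 1) / δ)..((j : ℝ) / δ), exp (-z))
      = 1 - exp (-((m : ℝ) / δ)) := by
    have h1 : ∑ j ∈ Finset.Icc 1 m,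
        (∫ z in (((j : ℝ) - 1) / δ)..((j : ℝ) / δ), exp (-z))
        = ∑ i ∈ Finset.range m,
          (exp (-((i : ℝ) / δ)) - exp (-(((i : ℝ) + 1) / δ))) := by
      rw [← Finset.Ico_add_one_right_eq_Icc, Finset.sum_Ico_eq_sum_range]
      refine Finset.sum_congr rfl fun i _ => ?_
      rw [hint]
      push_cast
      ring_nf
    rw [h1]
    have := Finset.sum_range_sub' (fun i : ℕ => exp (-((i : ℝ) / δ))) m
    simp only [Nat.cast_add, Nat.cast_one, Nat.cast_zero] at this ⊢
    rw [this]
    simp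
  rw [hsum]
  have hδ' : (0:ℝ) < δ := hδ
  have ht0 : (0:ℝ) < t := by exact_mod_cast ht1
  have he : (0:ℝ) < exp 1 := exp_pos 1
  -- exp(-(m/δ)) ≤ ε / exp 1
  have hexpm : exp (-((m : ℝ) / δ)) ≤ ε / exp 1 := by
    have h1 : exp (-((m : ℝ) / δ)) ≤ exp (-(log (exp 1 / ε))) :=
      exp_le_exp.2 (by linarith)
    have h2 : exp (-(log (exp 1 / ε))) = ε / exp 1 := by
      rw [exp_neg, exp_log (by positivity)]
      field_simp
    linarith [h1, h2 ▸ h1]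
  -- exp 1 * (t/δ) ≤ exp (t/δ)
  have het : exp 1 * ((t : ℝ) / δ) ≤ exp ((t : ℝ) / δ) := by
    have h1 : (t : ℝ) / δ - 1 + 1 ≤ exp ((t : ℝ) / δ - 1) :=
      Real.add_one_le_exp _
    have h2 : exp ((t : ℝ) / δ) = exp 1 * exp ((t : ℝ) / δ - 1) := by
      rw [← Real.exp_add]; ring_nf
    nlinarith [exp_pos ((t : ℝ) / δ - 1)]
  have hεe' : 0 ≤ 1 - ε / exp 1 := by
    rw [sub_nonneg, div_le_one he]; linarith
  have hkey : ((exp 1 - ε) / δ) * t ≤ exp ((t : ℝ) / δ) * (1 - exp (-((m : ℝ) / δ))) := by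
    have h1 : exp ((t : ℝ) / δ) * (1 - ε / exp 1)
        ≤ exp ((t : ℝ) / δ) * (1 - exp (-((m : ℝ) / δ))) := by
      apply mul_le_mul_of_nonneg_left (by linarith) (le_of_lt (exp_pos _))
    have h2 : exp 1 * ((t : ℝ) / δ) * (1 - ε / exp 1)
        ≤ exp ((t : ℝ) / δ) * (1 - ε / exp 1) :=
      mul_le_mul_of_nonneg_right het hεe'
    have h3 : exp 1 * ((t : ℝ) / δ) * (1 - ε / exp 1) = ((exp 1 - ε) / δ) * t := by
      field_simp
    linarith
  have hA : 0 ≤ (exp 1 - ε) / δ := div_nonneg (by linarith) hδ.le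
  rcases le_total ((m : ℝ) - c - t) 0 with h | h
  · rw [max_eq_right h]
    have : ((exp 1 - ε) / δ) * ((m : ℝ) - c) ≤ ((exp 1 - ε) / δ) * t :=
      mul_le_mul_of_nonneg_left (by linarith) hA
    linarith
  · rw [max_eq_left h]
    nlinarith
end
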